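/- Let u ∈ ℝ^n with u > 0 entrywise and ‖u‖ = 1, and set λ = λ(u) = min_i (𝒜(u)u)_i / u_i. Then 𝒜(u) − λI is a Z-matrix satisfying (𝒜(u) − λI)u ≥ 0 entrywise; moreover, if r(u,λ) ≠ 0 then 𝒜(u) − λI is a nonsingular M-matrix (it is invertible and its inverse is entrywise nonnegative), while if r(u,λ) = 0 then 𝒜(u) − λI is singular. -/

import Mathlib

open Matrix Finset

noncomputable def enorm' {n : ℕ} (u : Fin n → ℝ) : ℝ := Real.sqrt (∑ i, u i ^ 2)

def IsZMatrix {n : ℕ} (B : Matrix (Fin n) (Fin n) ℝ) : Prop :=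
  ∀ i j, i ≠ j → B i j ≤ 0

def IsIrreducibleMat {n : ℕ} (B : Matrix (Fin n) (Fin n) ℝ) : Prop :=
  ¬ ∃ S : Finset (Fin n), S.Nonempty ∧ S ≠ Finset.univ ∧
    ∀ i ∈ S, ∀ j ∉ S, B i j = 0

def IsNonsingularM {n : ℕ} (B : Matrix (Fin n) (Fin n) ℝ) : Prop :=
  IsZMatrix B ∧ IsUnit B ∧ ∀ i j, 0 ≤ B⁻¹ i j

noncomputable def calA {n : ℕ} (A : Matrix (Fin n) (Fin n) ℝ) (Γ : ℝ) (a : Fin n → ℝ)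
    (u : Fin n → ℝ) : Matrix (Fin n) (Fin n) ℝ :=
  A + Γ • Matrix.diagonal (fun i => 1 - 1 / (a i + u i ^ 2))

noncomputable def rvec {n : ℕ} (A : Matrix (Fin n) (Fin n) ℝ) (Γ : ℝ) (a : Fin n → ℝ)
    (u : Fin n → ℝ) (lam : ℝ) : Fin n → ℝ :=
  calA A Γ a u *ᵥ u - lam • u

noncomputable def Jmat {n : ℕ} (A : Matrix (Fin n) (Fin n) ℝ) (Γ : ℝ) (a : Fin n → ℝ)
    (u : Fin n → ℝ) (lam : ℝ) : Matrix (Fin n) (Fin n) ℝ :=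
  A + (Γ - lam) • (1 : Matrix (Fin n) (Fin n) ℝ)
    - Γ • Matrix.diagonal (fun i => (a i - u i ^ 2) / (a i + u i ^ 2) ^ 2)

noncomputable def lamOf {n : ℕ} [NeZero n] (A : Matrix (Fin n) (Fin n) ℝ) (Γ : ℝ)
    (a : Fin n → ℝ) (u : Fin n → ℝ) : ℝ :=
  ⨅ i, (calA A Γ a u *ᵥ u) i / u i

def NewtonSystem {n : ℕ} (A : Matrix (Fin n) (Fin n) ℝ) (Γ : ℝ) (a : Fin n → ℝ)
    (u : Fin n → ℝ) (lam : ℝ) (Δ : Fin n → ℝ) (δ : ℝ) : Prop :=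
  Jmat A Γ a u lam *ᵥ Δ - δ • u = -rvec A Γ a u lam ∧
  -(u ⬝ᵥ Δ) = -(1/2 * (u ⬝ᵥ u - 1))

lemma key {n : ℕ} [NeZero n] (B : Matrix (Fin n) (Fin n) ℝ)
    (hZ : IsZMatrix B) (hirr : IsIrreducibleMat B)
    (u : Fin n → ℝ) (hu : ∀ i, 0 < u i)
    (hBu : ∀ i, 0 ≤ (B *ᵥ u) i) (hBu0 : B *ᵥ u ≠ 0)
    (x : Fin n → ℝ) (hx : ∀ i, 0 ≤ (B *ᵥ x) i) : ∀ i, 0 ≤ x i := by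
  by_contra hcon
  push_neg at hcon
  obtain ⟨i1, hi1⟩ := hcon
  obtain ⟨i0, -, hi0⟩ := Finset.exists_max_image Finset.univ (fun i => -x i / u i)
    ⟨i1, Finset.mem_univ i1⟩
  set c : ℝ := -x i0 / u i0 with hc
  have hcpos : 0 < c := lt_of_lt_of_le (div_pos (by linarith) (hu i1)) (hi0 i1 (mem_univ i1))
  have hle : ∀ j, -x j ≤ c * u j := fun j => by
    have := (div_le_iff₀ (hu j)).mp (hi0 j (mem_univ j)); linarith [this]
  set S : Finset (Fin n) := Finset.univ.filter (fun i => -x i = c * u i) with hS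
  have hi0S : i0 ∈ S := by
    simp only [hS, Finset.mem_filter, Finset.mem_univ, true_and]
    rw [hc, div_mul_cancel₀ _ (hu i0).ne']
  have hmain : ∀ i ∈ S, (B *ᵥ u) i = 0 ∧ ∀ j ∉ S, B i j = 0 := by
    intro i hiS
    have hix : -x i = c * u i := by simpa [hS] using hiS
    have hsplit : ∑ j, B i j * (-x j) =
        c * (B *ᵥ u) i + ∑ j, B i j * (-x j - c * u j) := by
      simp only [mulVec, dotProduct, Finset.mul_sum, ← Finset.sum_add_distrib]
      exact Finset.sum_congr rfl fun j _ => by ring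
    have hterm : ∀ j ∈ Finset.univ, 0 ≤ B i j * (-x j - c * u j) := by
      intro j _
      rcases eq_or_ne j i with rfl | hne
      · rw [hix]; simp
      · nlinarith [hZ i j (Ne.symm hne), hle j]
    have hlhs : ∑ j, B i j * (-x j) ≤ 0 := by
      have := hx i
      simp only [mulVec, dotProduct] at this
      have : -∑ j, B i j * x j ≤ 0 := by linarith
      simpa [← Finset.sum_neg_distrib, mul_neg] using this
    have hsum0 : ∑ j, B i j * (-x j - c * u j) = 0 ∧ (B *ᵥ u) i = 0 := by
      have h1 : 0 ≤ ∑ j, B i j * (-x j - c * u j) := Finset.sum_nonneg hterm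
      have h2 : 0 ≤ c * (B *ᵥ u) i := mul_nonneg hcpos.le (hBu i)
      rw [hsplit] at hlhs
      constructor
      · linarith
      · have : c * (B *ᵥ u) i = 0 := by linarith
        rcases mul_eq_zero.mp this with h | h
        · exact absurd h hcpos.ne'
        · exact h
    refine ⟨hsum0.2, fun j hjS => ?_⟩
    have hj0 : B i j * (-x j - c * u j) = 0 :=
      (Finset.sum_eq_zero_iff_of_nonneg hterm).mp hsum0.1 j (mem_univ j)
    have hjlt : -x j - c * u j < 0 := by
      have : -x j ≠ c * u j := by simpa [hS] using hjS
      have := lt_of_le_of_ne (hle j) this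
      linarith
    rcases mul_eq_zero.mp hj0 with h | h
    · exact h
    · exact absurd h hjlt.ne
  by_cases hSuniv : S = Finset.univ
  · apply hBu0
    funext i
    exact (hmain i (hSuniv ▸ mem_univ i)).1
  · exact hirr ⟨S, ⟨i0, hi0S⟩, hSuniv, fun i hi j hj => (hmain i hi).2 j hj⟩

lemma key_main {n : ℕ} [NeZero n] (A : Matrix (Fin n) (Fin n) ℝ)
    (hA : IsZMatrix A) (hAirr : IsIrreducibleMat A)
    (u : Fin n → ℝ) (hu : ∀ i, 0 < u i)
    (calA : Matrix (Fin n) (Fin n) ℝ)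
    (hcal : ∀ i j, i ≠ j → calA i j = A i j)
    (rv : Fin n → ℝ) (lam : ℝ)
    (hrv : rv = calA *ᵥ u - lam • u)
    (hlam : ∀ i, lam ≤ (calA *ᵥ u) i / u i) :
    IsZMatrix (calA - lam • (1 : Matrix (Fin n) (Fin n) ℝ)) ∧
    (∀ i, 0 ≤ ((calA - lam • (1 : Matrix (Fin n) (Fin n) ℝ)) *ᵥ u) i) ∧
    (rv ≠ 0 →
      IsUnit (calA - lam • (1 : Matrix (Fin n) (Fin n) ℝ)) ∧
      ∀ i j, 0 ≤ (calA - lam • (1 : Matrix (Fin n) (Fin n) ℝ))⁻¹ i j) ∧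
    (rv = 0 → ¬ IsUnit (calA - lam • (1 : Matrix (Fin n) (Fin n) ℝ))) := by
  set B := calA - lam • (1 : Matrix (Fin n) (Fin n) ℝ) with hBdef
  have hoff : ∀ i j, i ≠ j → B i j = A i j := by
    intro i j hij
    simp [hBdef, Matrix.sub_apply, Matrix.smul_apply, Matrix.one_apply_ne hij, hcal i j hij]
  have hZ : IsZMatrix B := fun i j hij => (hoff i j hij) ▸ hA i j hij
  have hirr : IsIrreducibleMat B := by
    rintro ⟨S, hne, hnu, h0⟩
    exact hAirr ⟨S, hne, hnu, fun i hi j hj => by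
      have hij : i ≠ j := fun h => hj (h ▸ hi)
      rw [← hoff i j hij]; exact h0 i hi j hj⟩
  have hBu : B *ᵥ u = rv := by
    rw [hBdef, Matrix.sub_mulVec, Matrix.smul_mulVec, Matrix.one_mulVec, hrv]
  have hBunn : ∀ i, 0 ≤ (B *ᵥ u) i := by
    intro i
    have := (le_div_iff₀ (hu i)).mp (hlam i)
    rw [hBu, hrv]
    simp only [Pi.sub_apply, Pi.smul_apply, smul_eq_mul]
    linarith
  refine ⟨hZ, hBunn, ?_, ?_⟩
  · intro hr
    have hBu0 : B *ᵥ u ≠ 0 := by rw [hBu]; exact hr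
    have hkey := key B hZ hirr u hu hBunn hBu0
    have hdet : B.det ≠ 0 := by
      intro hd
      obtain ⟨v, hv0, hv⟩ := (Matrix.exists_mulVec_eq_zero_iff).mpr hd
      have h1 : ∀ i, 0 ≤ v i := hkey v (fun i => by rw [hv]; exact le_refl 0)
      have h2 : ∀ i, 0 ≤ (-v) i := hkey (-v) (fun i => by
        rw [Matrix.mulVec_neg, hv]; simp)
      exact hv0 (funext fun i => le_antisymm (by simpa using h2 i) (h1 i))
    have hunit : IsUnit B := (Matrix.isUnit_iff_isUnit_det B).mpr (isUnit_iff_ne_zero.mpr hdet)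
    refine ⟨hunit, fun i j => ?_⟩
    have hmul : B * B⁻¹ = 1 := Matrix.mul_nonsing_inv B (isUnit_iff_ne_zero.mpr hdet)
    have := hkey (fun k => B⁻¹ k j) (fun k => by
      have : (B *ᵥ fun k => B⁻¹ k j) k = (B * B⁻¹) k j := by
        simp [Matrix.mulVec, Matrix.mul_apply, dotProduct]
      rw [this, hmul, Matrix.one_apply]
      split <;> norm_num)
    exact this i
  · intro hr hunit
    have hBu0 : B *ᵥ u = 0 := by rw [hBu, hr]
    have hdet : IsUnit B.det := (Matrix.isUnit_iff_isUnit_det B).mp hunit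
    have : u = 0 := by
      have h1 : B⁻¹ *ᵥ (B *ᵥ u) = u := by
        rw [Matrix.mulVec_mulVec, Matrix.nonsing_inv_mul B hdet, Matrix.one_mulVec]
      rw [hBu0, Matrix.mulVec_zero] at h1
      exact h1.symm
    have i0 : Fin n := ⟨0, Nat.pos_of_ne_zero (NeZero.ne n)⟩
    exact absurd (congrFun this i0) (by simpa using (hu i0).ne')

theorem stmt_0 {n : ℕ} [NeZero n] (A : Matrix (Fin n) (Fin n) ℝ) (a : Fin n → ℝ) (Γ : ℝ)
    (ha : ∀ i, 0 < a i) (hΓ : 0 < Γ)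
    (hA : IsNonsingularM A) (hAirr : IsIrreducibleMat A)
    (u : Fin n → ℝ) (hu : ∀ i, 0 < u i) (hnorm : enorm' u = 1) :
    IsZMatrix (calA A Γ a u - lamOf A Γ a u • (1 : Matrix (Fin n) (Fin n) ℝ)) ∧
    (∀ i, 0 ≤ ((calA A Γ a u - lamOf A Γ a u • (1 : Matrix (Fin n) (Fin n) ℝ)) *ᵥ u) i) ∧
    (rvec A Γ a u (lamOf A Γ a u) ≠ 0 →
      IsUnit (calA A Γ a u - lamOf A Γ a u • (1 : Matrix (Fin n) (Fin n) ℝ)) ∧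
      ∀ i j, 0 ≤ (calA A Γ a u - lamOf A Γ a u • (1 : Matrix (Fin n) (Fin n) ℝ))⁻¹ i j) ∧
    (rvec A Γ a u (lamOf A Γ a u) = 0 →
      ¬ IsUnit (calA A Γ a u - lamOf A Γ a u • (1 : Matrix (Fin n) (Fin n) ℝ))) := by
  have hbdd : BddBelow (Set.range fun i => (calA A Γ a u *ᵥ u) i / u i) :=
    Set.Finite.bddBelow (Set.finite_range _)
  refine key_main A hA.1 hAirr u hu (calA A Γ a u) ?_ (rvec A Γ a u (lamOf A Γ a u))
    (lamOf A Γ a u) rfl (fun i => ciInf_le hbdd i)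
  intro i j hij
  simp [calA, Matrix.add_apply, Matrix.smul_apply, Matrix.diagonal_apply_ne _ hij]
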